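/- Let c > 0 and let F be a nonnegative function on G(n,k) that is uniformly polyconvex with constant c, i.e., Σ_{i=1}^d m_i * F(η_i) − F(η_0) ≥ c * (Σ_{i=1}^d m_i * ‖η_i‖ − ‖η_0‖) whenever d ≥ 1, m₁, …, m_d > 0, η_0, η₁, …, η_d ∈ G(n,k) and η_0 = Σ_{i=1}^d m_i • η_i. Then F is polyconvex: Conv_F(ξ) = F(ξ) for every ξ ∈ G(n,k), and hence there exists a gauge h on EuclideanSpace ℝ (Λ(n,k)) with h = F on G(n,k). -/

import Mathlib

open scoped BigOperators Matrix

/-- `Lam n k` : the `k`-element subsets of `Fin n` (the index set `Λ(n,k)`). -/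
abbrev Lam (n k : ℕ) : Type := {s : Finset (Fin n) // s.card = k}

/-- The Plücker (minor) vector of a matrix `A : Matrix (Fin n) (Fin k) ℝ`:
`M(A)(λ)` is the determinant of the `k × k` submatrix of `A` formed by the rows
indexed by `λ`. -/
noncomputable def pluecker (n k : ℕ) (A : Matrix (Fin n) (Fin k) ℝ) :
    EuclideanSpace ℝ (Lam n k) :=
  WithLp.toLp 2 fun lam => (A.submatrix (lam.1.orderEmbOfFin lam.2) id).det

/-- The Plücker model of the oriented Grassmannian `G(n,k)`. -/
def Grass (n k : ℕ) : Set (EuclideanSpace ℝ (Lam n k)) :=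
  {x | ∃ A : Matrix (Fin n) (Fin k) ℝ, Aᵀ * A = 1 ∧ pluecker n k A = x}

/-- The set of costs of representations of a point as a finite positive
combination of points of the Grassmannian. -/
def reprSet (n k : ℕ) (F : EuclideanSpace ℝ (Lam n k) → ℝ)
    (x : EuclideanSpace ℝ (Lam n k)) : Set ℝ :=
  {t | ∃ (N : ℕ) (m : Fin N → ℝ) (η : Fin N → EuclideanSpace ℝ (Lam n k)),
    1 ≤ N ∧ (∀ i, 0 < m i) ∧ (∀ i, η i ∈ Grass n k) ∧
    x = ∑ i, m i • η i ∧ t = ∑ i, m i * F (η i)}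

/-- The convex positively homogeneous hull of an integrand. -/
noncomputable def ConvF (n k : ℕ) (F : EuclideanSpace ℝ (Lam n k) → ℝ)
    (x : EuclideanSpace ℝ (Lam n k)) : ℝ :=
  sInf (reprSet n k F x)

/-- A gauge: a nonnegative, convex, positively homogeneous real function. -/
def IsGauge (n k : ℕ) (h : EuclideanSpace ℝ (Lam n k) → ℝ) : Prop :=
  (∀ x, 0 ≤ h x) ∧ ConvexOn ℝ Set.univ h ∧
    ∀ (t : ℝ) (x : EuclideanSpace ℝ (Lam n k)), 0 ≤ t → h (t • x) = t * h x

noncomputable def eVec (n k : ℕ) (lam : Lam n k) (ε : ℝ) : EuclideanSpace ℝ (Lam n k) :=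
  WithLp.toLp 2 fun μ => if μ = lam then ε else 0

lemma eVec_mem (n k : ℕ) (hk : 1 ≤ k) (lam : Lam n k) (ε : ℝ) (hε : ε = 1 ∨ ε = -1) :
    eVec n k lam ε ∈ Grass n k := by
  have hε2 : ε * ε = 1 := by rcases hε with h | h <;> simp [h]
  set f := lam.1.orderEmbOfFin lam.2 with hf
  set j0 : Fin k := ⟨0, hk⟩
  set s : Fin k → ℝ := fun j => if j = j0 then ε else 1 with hs
  have hss : ∀ j, s j * s j = 1 := by
    intro j; simp only [hs]; split <;> simp [hε2]
  refine ⟨Matrix.of fun i j => s j * (if f j = i then 1 else 0), ?_, ?_⟩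
  · ext j j'
    simp only [Matrix.mul_apply, Matrix.transpose_apply, Matrix.of_apply]
    have : ∀ i : Fin n, (s j * (if f j = i then 1 else 0)) * (s j' * (if f j' = i then 1 else 0))
        = if f j = i then (s j * (if f j' = i then s j' else 0)) else 0 := by
      intro i; split <;> split <;> ring_nf <;> simp_all
    rw [Finset.sum_congr rfl (fun i _ => this i)]
    rw [Finset.sum_ite_eq]
    by_cases hjj : j = j'
    · subst hjj; simp [hss, Matrix.one_apply]
    · have : f j' ≠ f j := fun h => hjj (f.injective h).symm
      simp [this, Matrix.one_apply, hjj]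
  · ext μ
    show (Matrix.det _) = eVec n k lam ε μ
    by_cases hμ : μ = lam
    · subst hμ
      have : (Matrix.of fun i j => s j * (if f j = i then 1 else 0)).submatrix f id
          = Matrix.diagonal s := by
        ext p q
        simp only [Matrix.submatrix_apply, Matrix.of_apply, Matrix.diagonal, id_eq]
        by_cases h : f q = f p
        · have : q = p := f.injective h
          subst this; simp
        · have : ¬ p = q := fun e => h (by rw [e])
          simp [h, this, Matrix.of_apply]
      rw [this, Matrix.det_diagonal]
      simp [eVec, hs, Finset.prod_ite_eq']
    · have hne : μ.1 ≠ lam.1 := fun h => hμ (Subtype.ext h)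
      have hsub : ¬ μ.1 ⊆ lam.1 := by
        intro h
        exact hne (Finset.eq_of_subset_of_card_le h (by rw [μ.2, lam.2]))
      obtain ⟨a, ha, hna⟩ := Finset.not_subset.mp hsub
      have : a ∈ Set.range (μ.1.orderEmbOfFin μ.2) := by
        rw [Finset.range_orderEmbOfFin]; exact ha
      obtain ⟨p, hp⟩ := this
      have : Matrix.det ((Matrix.of fun i j => s j * (if f j = i then 1 else 0)).submatrix
          (μ.1.orderEmbOfFin μ.2) id) = 0 := by
        apply Matrix.det_eq_zero_of_row_eq_zero p
        intro q
        have : f q ∈ lam.1 := Finset.orderEmbOfFin_mem lam.1 lam.2 q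
        have hne2 : f q ≠ μ.1.orderEmbOfFin μ.2 p := by rw [hp]; exact fun h => hna (h ▸ this)
        simp [Matrix.submatrix_apply, hne2]
      rw [this]; simp [eVec, hμ]

section
variable {n k : ℕ} {F : EuclideanSpace ℝ (Lam n k) → ℝ}
variable {n k : ℕ} {F : EuclideanSpace ℝ (Lam n k) → ℝ}

lemma reprSet_nonneg (hF : ∀ ξ ∈ Grass n k, 0 ≤ F ξ) {x : EuclideanSpace ℝ (Lam n k)}
    {t : ℝ} (ht : t ∈ reprSet n k F x) : 0 ≤ t := by
  obtain ⟨N, m, η, -, hm, hη, -, rfl⟩ := ht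
  exact Finset.sum_nonneg fun i _ => mul_nonneg (hm i).le (hF _ (hη i))

lemma reprSet_bddBelow (hF : ∀ ξ ∈ Grass n k, 0 ≤ F ξ) (x : EuclideanSpace ℝ (Lam n k)) :
    BddBelow (reprSet n k F x) := ⟨0, fun t ht => reprSet_nonneg hF ht⟩

lemma lam_nonempty (hkn : k ≤ n) : Nonempty (Lam n k) := by
  obtain ⟨s, -, hs⟩ := Finset.exists_subset_card_eq (s := (Finset.univ : Finset (Fin n)))
    (n := k) (by simpa using hkn)
  exact ⟨⟨s, hs⟩⟩

lemma sum_eVec (x : EuclideanSpace ℝ (Lam n k)) :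
    ∑ lam : Lam n k, x lam • eVec n k lam 1 = x := by
  ext μ
  rw [WithLp.ofLp_sum, Finset.sum_apply]
  simp only [PiLp.smul_apply, eVec, PiLp.toLp_apply, smul_eq_mul, mul_ite, mul_one, mul_zero]
  simp [Finset.sum_ite_eq]


lemma eVec_neg (lam : Lam n k) : eVec n k lam (-1) = - eVec n k lam 1 := by
  ext mu; simp only [PiLp.neg_apply, eVec, PiLp.toLp_apply]; split <;> simp

lemma reprSet_nonempty (hk : 1 ≤ k) (hkn : k ≤ n) (x : EuclideanSpace ℝ (Lam n k)) :
    (reprSet n k F x).Nonempty := by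
  haveI : Nonempty (Lam n k) := lam_nonempty hkn
  set ι := Lam n k × Bool
  set e : Fin (Fintype.card ι) ≃ ι := (Fintype.equivFin ι).symm
  set M : Lam n k → ℝ := fun lam => |x lam| + 1 with hM
  set g : ι → ℝ := fun p => cond p.2 (x p.1 + M p.1) (M p.1) with hg
  set η' : ι → EuclideanSpace ℝ (Lam n k) := fun p => eVec n k p.1 (cond p.2 1 (-1)) with hη'
  have hgpos : ∀ p : ι, 0 < g p := by
    rintro ⟨lam, b⟩
    cases b <;> simp only [hg, hM, Bool.cond_true, Bool.cond_false] <;>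
      [linarith [abs_nonneg (x lam)]; linarith [neg_abs_le (x lam)]]
  have hmem : ∀ p : ι, η' p ∈ Grass n k := by
    rintro ⟨lam, b⟩
    cases b <;> exact eVec_mem n k hk lam _ (by simp [hη'])
  refine ⟨_, Fintype.card ι, fun i => g (e i), fun i => η' (e i),
    Fintype.card_pos, fun i => hgpos (e i), fun i => hmem (e i), ?_, rfl⟩
  rw [Equiv.sum_comp e (fun p => g p • η' p)]
  rw [Fintype.sum_prod_type]
  have key : ∀ lam : Lam n k, ∑ b : Bool, g (lam, b) • η' (lam, b) = x lam • eVec n k lam 1 := by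
    intro lam
    rw [Fintype.sum_bool]
    simp only [hg, hM, hη', Bool.cond_true, Bool.cond_false]
    rw [eVec_neg]
    module
  rw [Finset.sum_congr rfl (fun lam _ => key lam), sum_eVec]

lemma ConvF_le {x : EuclideanSpace ℝ (Lam n k)} {t : ℝ} (hF : ∀ ξ ∈ Grass n k, 0 ≤ F ξ)
    (ht : t ∈ reprSet n k F x) : ConvF n k F x ≤ t :=
  csInf_le (reprSet_bddBelow hF x) ht

lemma ConvF_nonneg (hF : ∀ ξ ∈ Grass n k, 0 ≤ F ξ) (x : EuclideanSpace ℝ (Lam n k)) :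
    0 ≤ ConvF n k F x :=
  Real.sInf_nonneg (fun t ht => reprSet_nonneg hF ht)

lemma reprSet_smul {x : EuclideanSpace ℝ (Lam n k)} {s t : ℝ} (hts : 0 < t)
    (hs : s ∈ reprSet n k F x) : t * s ∈ reprSet n k F (t • x) := by
  obtain ⟨N, m, η, hN, hm, hη, hx, rfl⟩ := hs
  exact ⟨N, fun i => t * m i, η, hN, fun i => mul_pos hts (hm i), hη,
    by rw [hx, Finset.smul_sum]; simp [smul_smul],
    by rw [Finset.mul_sum]; simp [mul_assoc]⟩

lemma reprSet_add {x y : EuclideanSpace ℝ (Lam n k)} {s t : ℝ}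
    (hs : s ∈ reprSet n k F x) (ht : t ∈ reprSet n k F y) :
    s + t ∈ reprSet n k F (x + y) := by
  obtain ⟨N, m, η, hN, hm, hη, hx, rfl⟩ := hs
  obtain ⟨N', m', η', hN', hm', hη', hy, rfl⟩ := ht
  refine ⟨N + N', Fin.append m m', Fin.append η η', le_add_right hN, ?_, ?_, ?_, ?_⟩
  · intro i
    refine Fin.addCases (fun j => ?_) (fun j => ?_) i
    · rw [Fin.append_left]; exact hm j
    · rw [Fin.append_right]; exact hm' j
  · intro i
    refine Fin.addCases (fun j => ?_) (fun j => ?_) i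
    · rw [Fin.append_left]; exact hη j
    · rw [Fin.append_right]; exact hη' j
  · rw [Fin.sum_univ_add]
    simp only [Fin.append_left, Fin.append_right]
    rw [hx, hy]
  · rw [Fin.sum_univ_add]
    simp only [Fin.append_left, Fin.append_right]

lemma ConvF_zero (hk : 1 ≤ k) (hkn : k ≤ n) (hF : ∀ ξ ∈ Grass n k, 0 ≤ F ξ) :
    ConvF n k F 0 = 0 := by
  obtain ⟨lam⟩ := lam_nonempty (k := k) hkn
  set K := F (eVec n k lam 1) + F (eVec n k lam (-1)) with hKdef
  have hK : 0 ≤ K := add_nonneg (hF _ (eVec_mem n k hk lam 1 (Or.inl rfl)))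
    (hF _ (eVec_mem n k hk lam (-1) (Or.inr rfl)))
  have hrep : ∀ ε : ℝ, 0 < ε → ε * K ∈ reprSet n k F 0 := by
    intro ε hε
    refine ⟨2, ![ε, ε], ![eVec n k lam 1, eVec n k lam (-1)], by norm_num, ?_, ?_, ?_, ?_⟩
    · intro i; fin_cases i <;> simpa using hε
    · intro i; fin_cases i
      · exact eVec_mem n k hk lam 1 (Or.inl rfl)
      · exact eVec_mem n k hk lam (-1) (Or.inr rfl)
    · rw [Fin.sum_univ_two]
      simp only [Matrix.cons_val_zero, Matrix.cons_val_one, Matrix.head_cons, eVec_neg]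
      module
    · rw [Fin.sum_univ_two]
      simp only [Matrix.cons_val_zero, Matrix.cons_val_one, Matrix.head_cons, hKdef]
      ring
  have h1 : ∀ ε : ℝ, 0 < ε → ConvF n k F 0 ≤ ε * K := fun ε hε => ConvF_le hF (hrep ε hε)
  have h0 := ConvF_nonneg hF (0 : EuclideanSpace ℝ (Lam n k))
  refine le_antisymm ?_ h0
  by_contra hlt
  push_neg at hlt
  have hK1 : (0:ℝ) < 2 * (K + 1) := by linarith
  have h2 := h1 (ConvF n k F 0 / (2 * (K + 1))) (by positivity)
  rw [div_mul_eq_mul_div, le_div_iff₀ hK1] at h2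
  nlinarith

lemma ConvF_smul_le (hk : 1 ≤ k) (hkn : k ≤ n) (hF : ∀ ξ ∈ Grass n k, 0 ≤ F ξ)
    {t : ℝ} (ht : 0 < t) (x : EuclideanSpace ℝ (Lam n k)) :
    ConvF n k F (t • x) ≤ t * ConvF n k F x := by
  have h2 : ConvF n k F (t • x) / t ≤ ConvF n k F x := by
    refine le_csInf (reprSet_nonempty hk hkn x) (fun s hs => ?_)
    rw [div_le_iff₀ ht]
    have := ConvF_le hF (reprSet_smul ht hs)
    linarith [this]
  rw [div_le_iff₀ ht] at h2
  linarith

lemma ConvF_smul (hk : 1 ≤ k) (hkn : k ≤ n) (hF : ∀ ξ ∈ Grass n k, 0 ≤ F ξ)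
    {t : ℝ} (ht : 0 < t) (x : EuclideanSpace ℝ (Lam n k)) :
    ConvF n k F (t • x) = t * ConvF n k F x := by
  refine le_antisymm (ConvF_smul_le hk hkn hF ht x) ?_
  have h := ConvF_smul_le hk hkn hF (inv_pos.mpr ht) (t • x)
  rw [inv_smul_smul₀ ht.ne' x] at h
  have := mul_le_mul_of_nonneg_left h ht.le
  rw [← mul_assoc, mul_inv_cancel₀ ht.ne', one_mul] at this
  linarith

end

/-- uniform polyconvexity implies polyconvexity. -/
theorem polyconvex_of_uniformly_polyconvex (n k : ℕ) (hk : 1 ≤ k) (hkn : k ≤ n)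
    (c : ℝ) (hc : 0 < c)
    (F : EuclideanSpace ℝ (Lam n k) → ℝ)
    (hF : ∀ ξ ∈ Grass n k, 0 ≤ F ξ)
    (hUPC : ∀ (d : ℕ), 1 ≤ d → ∀ (m : Fin d → ℝ)
      (η₀ : EuclideanSpace ℝ (Lam n k)) (η : Fin d → EuclideanSpace ℝ (Lam n k)),
      (∀ i, 0 < m i) → η₀ ∈ Grass n k → (∀ i, η i ∈ Grass n k) →
      η₀ = ∑ i, m i • η i →
      ∑ i, m i * F (η i) - F η₀ ≥ c * ((∑ i, m i * ‖η i‖) - ‖η₀‖)) :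
    (∀ ξ ∈ Grass n k, ConvF n k F ξ = F ξ) ∧
    (∃ h : EuclideanSpace ℝ (Lam n k) → ℝ, IsGauge n k h ∧
      ∀ ξ ∈ Grass n k, h ξ = F ξ) := by
  have hself : ∀ ξ ∈ Grass n k, F ξ ∈ reprSet n k F ξ := by
    intro ξ hξ
    exact ⟨1, fun _ => 1, fun _ => ξ, le_refl 1, fun _ => one_pos, fun _ => hξ,
      by simp, by simp⟩
  have hmain : ∀ ξ ∈ Grass n k, ConvF n k F ξ = F ξ := by
    intro ξ hξ
    refine le_antisymm (ConvF_le hF (hself ξ hξ)) ?_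
    refine le_csInf ⟨F ξ, hself ξ hξ⟩ (fun t ht => ?_)
    obtain ⟨N, m, η, hN, hm, hη, hx, rfl⟩ := ht
    have key := hUPC N hN m ξ η hm hξ hη hx
    have tri : ‖ξ‖ ≤ ∑ i, m i * ‖η i‖ := by
      calc ‖ξ‖ = ‖∑ i, m i • η i‖ := by rw [hx]
        _ ≤ ∑ i, ‖m i • η i‖ := norm_sum_le _ _
        _ = ∑ i, m i * ‖η i‖ := by
            refine Finset.sum_congr rfl (fun i _ => ?_)
            rw [norm_smul, Real.norm_eq_abs, abs_of_pos (hm i)]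
    nlinarith [mul_nonneg hc.le (sub_nonneg.mpr tri)]
  refine ⟨hmain, ConvF n k F, ⟨ConvF_nonneg hF, ⟨convex_univ, ?_⟩, ?_⟩,
    fun ξ hξ => hmain ξ hξ⟩
  · intro x _ y _ a b ha hb hab
    simp only [smul_eq_mul]
    rcases ha.eq_or_lt with rfl | hA
    · have hb1 : b = 1 := by linarith
      subst hb1; simp
    rcases hb.eq_or_lt with rfl | hB
    · have ha1 : a = 1 := by linarith
      subst ha1; simp
    refine le_of_forall_pos_le_add (fun ε hε => ?_)
    obtain ⟨s, hs, hslt⟩ := Real.lt_sInf_add_pos (reprSet_nonempty hk hkn x) hε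
    obtain ⟨t, ht, htlt⟩ := Real.lt_sInf_add_pos (reprSet_nonempty hk hkn y) hε
    have h1 : ConvF n k F (a • x + b • y) ≤ a * s + b * t :=
      ConvF_le hF (reprSet_add (reprSet_smul hA hs) (reprSet_smul hB ht))
    have h2 : a * s < a * (ConvF n k F x + ε) := by
      exact mul_lt_mul_of_pos_left hslt hA
    have h3 : b * t < b * (ConvF n k F y + ε) := by
      exact mul_lt_mul_of_pos_left htlt hB
    nlinarith
  · intro t x ht
    rcases ht.eq_or_lt with rfl | htpos
    · rw [zero_smul, ConvF_zero hk hkn hF, zero_mul]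
    · exact ConvF_smul hk hkn hF htpos x
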